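/- Let F be a complete discretely valued field of characteristic 2 with uniformizer f, and let b, c ∈ F with v(b) = 0 and v(c) ∈ {0, 1}. Fix r ≥ 0. Then the equation f^{2r+1}x² + f^{2r+1}xy + by² = c·f^{2r} has a solution (x, y) ∈ F² if and only if it has a solution modulo f^{4r+3} (with x, y in the valuation ring). Moreover, any solution (x, y) ∈ F² automatically lies in the valuation ring. -/

import Mathlib

open IsLocalRing Polynomial

private lemma AS_root (O : Type*) [CommRing O] [IsLocalRing O]
    [IsAdicComplete (IsLocalRing.maximalIdeal O) O] (e : O)
    (he : e ∈ IsLocalRing.maximalIdeal O) : ∃ u : O, u ^ 2 + u + e = 0 := by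
  obtain ⟨a, ha, -⟩ := (IsAdicComplete.henselianRing O (IsLocalRing.maximalIdeal O)).is_henselian
    (X ^ 2 + X + C e) (by monicity!) 0 (by simpa using he) (by simp)
  exact ⟨a, by simpa [Polynomial.IsRoot] using ha⟩

private lemma solve_quad (O : Type*) [CommRing O] [IsLocalRing O]
    [IsAdicComplete (IsLocalRing.maximalIdeal O) O] (b : Oˣ) (B ρ e : O)
    (he : (b : O) * ρ = B ^ 2 * e) (hem : e ∈ IsLocalRing.maximalIdeal O) :
    ∃ δ : O, (b : O) * δ ^ 2 + B * δ + ρ = 0 := by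
  obtain ⟨u, hu⟩ := AS_root O e hem
  refine ⟨(↑b⁻¹ : O) * B * u, ?_⟩
  have hbi : (b : O) * (↑b⁻¹ : O) = 1 := by exact_mod_cast b.mul_inv
  linear_combination ((↑b⁻¹ : O) * B ^ 2) * hu +
    ((↑b⁻¹ : O) * B ^ 2 * u ^ 2 - ρ) * hbi + (↑b⁻¹ : O) * he

private lemma descent (O : Type*) [CommRing O] [IsDomain O] [IsDiscreteValuationRing O]
    (π : O) (hπ : Irreducible π) (b : Oˣ) (c : O)
    (hc : ∃ u : Oˣ, c = u ∨ c = u * π) (r : ℕ) :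
    ∀ m : ℕ, ∀ a a' : O,
      π^(2*r+1)*a^2 + π^(2*r+1)*a*a' + (b : O)*a'^2 = c*π^(2*r)*π^(2*m) →
      π^m ∣ a ∧ π^m ∣ a' := by
  have hprime : Prime π := UniqueFactorizationMonoid.irreducible_iff_prime.mp hπ
  have hπ0 : π ≠ 0 := hπ.ne_zero
  obtain ⟨cu, hcu⟩ := hc
  intro m
  induction m with
  | zero => intro a a' _; simp
  | succ m ih =>
    intro a a' heq
    -- Step 1 : π ∣ a'
    have hda' : π ∣ a' := by
      have h3 : π ∣ (b : O) * a'^2 := by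
        have h1 : π ∣ π^(2*r+1)*a^2 := dvd_mul_of_dvd_left (dvd_pow_self π (by omega)) _
        have h2 : π ∣ π^(2*r+1)*a*a' := dvd_mul_of_dvd_left (dvd_mul_of_dvd_left (dvd_pow_self π (by omega)) _) _
        have h4 : π ∣ c*π^(2*r)*π^(2*(m+1)) := dvd_mul_of_dvd_right (dvd_pow_self π (by omega)) _
        have h5 : (b : O) * a'^2 = c*π^(2*r)*π^(2*(m+1)) - π^(2*r+1)*a^2 - π^(2*r+1)*a*a' := by
          linear_combination heq
        rw [h5]; exact dvd_sub (dvd_sub h4 h1) h2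
      rcases hprime.dvd_or_dvd h3 with h | h
      · exact absurd (isUnit_of_dvd_unit h b.isUnit) hπ.not_isUnit
      · exact hprime.dvd_of_dvd_pow h
    -- Step 2 : π ∣ a
    have hda : π ∣ a := by
      by_contra hna
      have hauO : IsUnit a := by
        by_contra hnu
        have h1 : a ∈ IsLocalRing.maximalIdeal O :=
          (IsLocalRing.mem_maximalIdeal a).mpr (mem_nonunits_iff.mpr hnu)
        rw [(IsDiscreteValuationRing.irreducible_iff_uniformizer π).mp hπ] at h1
        exact hna (Ideal.mem_span_singleton.mp h1)
      obtain ⟨au, rfl⟩ := hauO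
      rcases eq_or_ne a' 0 with rfl | ha'0
      · -- a' = 0 : parity contradiction
        rcases hcu with rfl | rfl
        · have h6 : (au * au : Oˣ) * π ^ (2*r+1) = cu * π ^ (2*r+2*(m+1)) := by
            push_cast; linear_combination heq
          have := IsDiscreteValuationRing.unit_mul_pow_congr_pow hπ hπ _ _ _ _ h6
          omega
        · have h6 : (au * au : Oˣ) * π ^ (2*r+1) = cu * π ^ (2*r+2*(m+1)+1) := by
            push_cast; linear_combination heq
          have := IsDiscreteValuationRing.unit_mul_pow_congr_pow hπ hπ _ _ _ _ h6
          omega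
      · obtain ⟨t, η, hfa'⟩ := IsDiscreteValuationRing.eq_unit_mul_pow_irreducible ha'0 hπ
        subst hfa'
        have ht1 : 1 ≤ t := by
          by_contra h
          have ht0 : t = 0 := by omega
          subst ht0
          simp only [pow_zero, mul_one] at hda'
          exact hπ.not_isUnit (isUnit_of_dvd_unit hda' η.isUnit)
        rcases le_or_gt t r with htr | htr
        · -- t ≤ r : π^(2t+1) divides everything except the bη²π^(2t) term
          have h7 : π^(2*t+1) ∣ (b : O) * (η : O)^2 * π^(2*t) := by
            have h1 : π^(2*t+1) ∣ π^(2*r+1)*(au:O)^2 := dvd_mul_of_dvd_left (pow_dvd_pow π (by omega)) _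
            have h2 : π^(2*t+1) ∣ π^(2*r+1)*(au:O)*((η:O) * π^t) := by
              have he2 : π^(2*r+1)*(au:O)*((η:O) * π^t) = π^(2*r+1+t) * ((au:O)*(η:O)) := by ring
              rw [he2]
              exact dvd_mul_of_dvd_left (pow_dvd_pow π (by omega)) _
            have h4 : π^(2*t+1) ∣ c*π^(2*r)*π^(2*(m+1)) := by
              have he4 : c*π^(2*r)*π^(2*(m+1)) = π^(2*r+2*(m+1)) * c := by ring
              rw [he4]
              exact dvd_mul_of_dvd_left (pow_dvd_pow π (by omega)) _
            have h5 : (b : O) * (η : O)^2 * π^(2*t) =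
                c*π^(2*r)*π^(2*(m+1)) - π^(2*r+1)*(au:O)^2 - π^(2*r+1)*(au:O)*((η:O) * π^t) := by
              linear_combination heq
            rw [h5]; exact dvd_sub (dvd_sub h4 h1) h2
          obtain ⟨k, hk⟩ := h7
          have hk' : π^(2*t) * ((b:O) * (η:O)^2) = π^(2*t) * (π * k) := by
            calc π^(2*t) * ((b:O) * (η:O)^2) = (b : O) * (η : O)^2 * π^(2*t) := by ring
            _ = π^(2*t+1) * k := hk
            _ = π^(2*t) * (π * k) := by ring
          have h8 : (b:O) * (η:O)^2 = π * k := mul_left_cancel₀ (pow_ne_zero _ hπ0) hk'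
          have h9 : π ∣ (b:O) * (η:O)^2 := ⟨k, h8⟩
          rcases hprime.dvd_or_dvd h9 with h | h
          · exact absurd (isUnit_of_dvd_unit h b.isUnit) hπ.not_isUnit
          · exact absurd (isUnit_of_dvd_unit (hprime.dvd_of_dvd_pow h) η.isUnit) hπ.not_isUnit
        · -- t ≥ r+1 : π^(2r+2) divides everything except π^(2r+1)au²
          have h7 : π^(2*r+2) ∣ π^(2*r+1)*(au:O)^2 := by
            have h2 : π^(2*r+2) ∣ π^(2*r+1)*(au:O)*((η:O) * π^t) := by
              have : π^(2*r+1)*(au:O)*((η:O) * π^t) = π^(2*r+1+t) * ((au:O)*(η:O)) := by ring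
              rw [this]
              exact dvd_mul_of_dvd_left (pow_dvd_pow π (by omega)) _
            have h3 : π^(2*r+2) ∣ (b:O)*((η:O) * π^t)^2 := by
              have : (b:O)*((η:O) * π^t)^2 = π^(2*t) * ((b:O)*(η:O)^2) := by ring
              rw [this]
              exact dvd_mul_of_dvd_left (pow_dvd_pow π (by omega)) _
            have h4 : π^(2*r+2) ∣ c*π^(2*r)*π^(2*(m+1)) := by
              have he4 : c*π^(2*r)*π^(2*(m+1)) = π^(2*r+2*(m+1)) * c := by ring
              rw [he4]
              exact dvd_mul_of_dvd_left (pow_dvd_pow π (by omega)) _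
            have h5 : π^(2*r+1)*(au:O)^2 =
                c*π^(2*r)*π^(2*(m+1)) - π^(2*r+1)*(au:O)*((η:O) * π^t) - (b:O)*((η:O) * π^t)^2 := by
              linear_combination heq
            rw [h5]; exact dvd_sub (dvd_sub h4 h2) h3
          obtain ⟨k, hk⟩ := h7
          have hk' : π^(2*r+1) * ((au:O)^2) = π^(2*r+1) * (π * k) := by
            calc π^(2*r+1) * ((au:O)^2) = π^(2*r+1)*(au:O)^2 := by ring
            _ = π^(2*r+2) * k := hk
            _ = π^(2*r+1) * (π * k) := by ring
          have h8 : (au:O)^2 = π * k := mul_left_cancel₀ (pow_ne_zero _ hπ0) hk'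
          exact absurd (isUnit_of_dvd_unit (hprime.dvd_of_dvd_pow ⟨k, h8⟩) au.isUnit) hπ.not_isUnit
    -- Step 3 : divide by π and recurse
    obtain ⟨a₁, rfl⟩ := hda
    obtain ⟨a₁', rfl⟩ := hda'
    have heq2 : π^2 * (π^(2*r+1)*a₁^2 + π^(2*r+1)*a₁*a₁' + (b:O)*a₁'^2)
        = π^2 * (c*π^(2*r)*π^(2*m)) := by linear_combination heq
    obtain ⟨d1, d2⟩ := ih a₁ a₁' (mul_left_cancel₀ (pow_ne_zero 2 hπ0) heq2)
    obtain ⟨k1, hk1⟩ := d1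
    obtain ⟨k2, hk2⟩ := d2
    exact ⟨⟨k1, by rw [hk1]; ring⟩, ⟨k2, by rw [hk2]; ring⟩⟩

private lemma rep_lemma (O : Type*) [CommRing O] [IsDomain O] [IsDiscreteValuationRing O]
    (K : Type*) [Field K] [Algebra O K] [IsFractionRing O K]
    (π : O) (hπ : Irreducible π) (z : K) :
    ∃ (m : ℕ) (a : O), z = algebraMap O K a / algebraMap O K (π ^ m) := by
  obtain ⟨a, s, hs, hz⟩ := IsFractionRing.div_surjective (A := O) z
  have hs0 : s ≠ 0 := nonZeroDivisors.ne_zero hs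
  obtain ⟨n, u, hsu⟩ := IsDiscreteValuationRing.eq_unit_mul_pow_irreducible hs0 hπ
  have hinj : Function.Injective (algebraMap O K) := IsFractionRing.injective O K
  have hπK : algebraMap O K π ≠ 0 := by
    rw [map_ne_zero_iff _ hinj]; exact hπ.ne_zero
  have huK : algebraMap O K (u : O) ≠ 0 := by
    rw [map_ne_zero_iff _ hinj]; exact u.ne_zero
  refine ⟨n, (↑u⁻¹ : O) * a, ?_⟩
  rw [← hz, hsu]
  have huu : algebraMap O K ((u:O) * (↑u⁻¹:O)) = 1 := by
    rw [show (u:O) * (↑u⁻¹:O) = 1 by exact_mod_cast u.mul_inv, map_one]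
  simp only [map_mul, map_pow]
  field_simp
  have huu2 : algebraMap O K (u:O) * algebraMap O K (↑u⁻¹:O) = 1 := by
    rw [← map_mul]; exact huu
  linear_combination (-(algebraMap O K a)) * huu2

private lemma integral_key (O : Type*) [CommRing O] [IsDomain O] [IsDiscreteValuationRing O]
    (K : Type*) [Field K] [Algebra O K] [IsFractionRing O K]
    (π : O) (hπ : Irreducible π) (b : Oˣ) (c : O)
    (hc : ∃ u : Oˣ, c = u ∨ c = u * π) (r : ℕ) (x y : K)
    (heq : algebraMap O K (π^(2*r+1)) * x^2 + algebraMap O K (π^(2*r+1)) * x * y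
        + algebraMap O K (b : O) * y^2 = algebraMap O K (c * π^(2*r))) :
    (∃ x' : O, algebraMap O K x' = x) ∧ (∃ y' : O, algebraMap O K y' = y) := by
  have hinj : Function.Injective (algebraMap O K) := IsFractionRing.injective O K
  have hπ0 : π ≠ 0 := hπ.ne_zero
  obtain ⟨mx, ax, hx⟩ := rep_lemma O K π hπ x
  obtain ⟨my, ay, hy⟩ := rep_lemma O K π hπ y
  set m := max mx my with hm
  have hne : ∀ k : ℕ, algebraMap O K (π^k) ≠ 0 := fun k => by
    rw [map_ne_zero_iff _ hinj]; exact pow_ne_zero _ hπ0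
  have hx' : x = algebraMap O K (ax * π^(m - mx)) / algebraMap O K (π^m) := by
    rw [hx, show (π:O)^m = π^mx * π^(m-mx) from by rw [← pow_add]; congr 1; omega,
      map_mul, map_mul, div_eq_div_iff (hne mx) (mul_ne_zero (hne mx) (hne (m-mx)))]
    ring
  have hy' : y = algebraMap O K (ay * π^(m - my)) / algebraMap O K (π^m) := by
    rw [hy, show (π:O)^m = π^my * π^(m-my) from by rw [← pow_add]; congr 1; omega,
      map_mul, map_mul, div_eq_div_iff (hne my) (mul_ne_zero (hne my) (hne (m-my)))]
    ring
  set A := ax * π^(m - mx) with hA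
  set A' := ay * π^(m - my) with hA'
  have hOeq : π^(2*r+1)*A^2 + π^(2*r+1)*A*A' + (b:O)*A'^2 = c*π^(2*r)*π^(2*m) := by
    apply hinj
    have h0 := hne m
    have hcl : algebraMap O K (π^(2*r+1)) * (algebraMap O K A)^2
        + algebraMap O K (π^(2*r+1)) * algebraMap O K A * algebraMap O K A'
        + algebraMap O K (b:O) * (algebraMap O K A')^2
        = algebraMap O K (c*π^(2*r)) * (algebraMap O K (π^m))^2 := by
      have hπK : algebraMap O K π ≠ 0 := by rw [map_ne_zero_iff _ hinj]; exact hπ0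
      rw [hx', hy'] at heq
      rw [← heq]
      field_simp
    simp only [map_add, map_mul, map_pow] at hcl ⊢
    linear_combination hcl
  obtain ⟨ha1, ha2⟩ := descent O π hπ b c hc r m A A' hOeq
  obtain ⟨k1, hk1⟩ := ha1
  obtain ⟨k2, hk2⟩ := ha2
  constructor
  · exact ⟨k1, by rw [hx', hk1, map_mul, mul_comm, mul_div_assoc, div_self (hne m), mul_one]⟩
  · exact ⟨k2, by rw [hy', hk2, map_mul, mul_comm, mul_div_assoc, div_self (hne m), mul_one]⟩

/-- Let `O` be a complete DVR of characteristic 2 with uniformizer `π` and fraction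
field `K`; let `b` be a unit and `v(c) ∈ {0,1}`. Then
`π^{2r+1}x² + π^{2r+1}xy + by² = cπ^{2r}` has a solution in `K` iff it has a solution
modulo `π^{4r+3}` with `x, y` integral; moreover every `K`-solution is integral. -/
theorem stmt12 (O : Type*) [CommRing O] [IsDomain O] [IsDiscreteValuationRing O]
    [IsAdicComplete (IsLocalRing.maximalIdeal O) O]
    (K : Type*) [Field K] [Algebra O K] [IsFractionRing O K] [CharP K 2]
    (π : O) (hπ : Irreducible π) (b : Oˣ) (c : O)
    (hc : ∃ u : Oˣ, c = u ∨ c = u * π) (r : ℕ) :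
    ((∃ x y : K, algebraMap O K (π^(2*r+1)) * x^2 + algebraMap O K (π^(2*r+1)) * x * y
        + algebraMap O K (b : O) * y^2 = algebraMap O K (c * π^(2*r)))
      ↔ (∃ x y : O, π^(4*r+3) ∣
          (π^(2*r+1)*x^2 + π^(2*r+1)*x*y + (b : O)*y^2 - c*π^(2*r))))
    ∧ (∀ x y : K, algebraMap O K (π^(2*r+1)) * x^2 + algebraMap O K (π^(2*r+1)) * x * y
          + algebraMap O K (b : O) * y^2 = algebraMap O K (c * π^(2*r)) →
        (∃ x' : O, algebraMap O K x' = x) ∧ (∃ y' : O, algebraMap O K y' = y)) := by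

  have hinj : Function.Injective (algebraMap O K) := IsFractionRing.injective O K
  haveI hchar : CharP O 2 := RingHom.charP (algebraMap O K) hinj 2
  have h2 : (2 : O) = 0 := by exact_mod_cast CharP.cast_eq_zero O 2
  have hπ0 : π ≠ 0 := hπ.ne_zero
  have hprime : Prime π := UniqueFactorizationMonoid.irreducible_iff_prime.mp hπ
  have hMI : IsLocalRing.maximalIdeal O = Ideal.span {π} :=
    (IsDiscreteValuationRing.irreducible_iff_uniformizer π).mp hπ
  have key := fun x y h => integral_key O K π hπ b c hc r x y h
  obtain ⟨cu, hcu⟩ := hc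
  refine ⟨⟨?_, ?_⟩, key⟩
  · -- forward: exact solution gives approximate solution
    rintro ⟨x, y, hxy⟩
    obtain ⟨⟨x1, rfl⟩, ⟨y1, rfl⟩⟩ := key x y hxy
    refine ⟨x1, y1, ?_⟩
    have hO : π^(2*r+1)*x1^2 + π^(2*r+1)*x1*y1 + (b : O)*y1^2 = c*π^(2*r) := by
      apply hinj
      simp only [map_add, map_mul, map_pow] at hxy ⊢
      linear_combination hxy
    rw [show π^(2*r+1)*x1^2 + π^(2*r+1)*x1*y1 + (b : O)*y1^2 - c*π^(2*r) = 0 by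
      rw [hO]; ring]
    exact dvd_zero _
  · -- backward: Hensel lifting
    rintro ⟨x₀, y₀, hd⟩
    obtain ⟨ρ₁, hρ⟩ := hd
    rcases hcu with rfl | rfl
    · -- case v(c) = 0 : c = cu a unit
      -- b y₀² = π^(2r) * W with W a unit
      set W : O := (cu : O) + π*(π^(2*r+2)*ρ₁ - x₀^2 - x₀*y₀) with hW
      have hby : (b : O) * y₀^2 = π^(2*r) * W := by
        rw [hW]; linear_combination hρ
      have hwu : IsUnit W := by
        by_contra hnu
        have h1 : W ∈ IsLocalRing.maximalIdeal O :=
          (IsLocalRing.mem_maximalIdeal W).mpr (mem_nonunits_iff.mpr hnu)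
        rw [hMI, Ideal.mem_span_singleton] at h1
        obtain ⟨k, hk⟩ := h1
        have hdc : π ∣ (cu : O) := ⟨k - (π^(2*r+2)*ρ₁ - x₀^2 - x₀*y₀), by
          rw [hW] at hk; linear_combination hk⟩
        exact hπ.not_isUnit (isUnit_of_dvd_unit hdc cu.isUnit)
      have hy₀0 : y₀ ≠ 0 := by
        rintro rfl
        rw [zero_pow two_ne_zero, mul_zero] at hby
        exact hwu.ne_zero ((mul_eq_zero.mp hby.symm).resolve_left (pow_ne_zero _ hπ0))
      obtain ⟨n, η, hyfac⟩ := IsDiscreteValuationRing.eq_unit_mul_pow_irreducible hy₀0 hπ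
      subst hyfac
      obtain ⟨wu, hwu'⟩ := hwu
      have hn : 2*n = 2*r := by
        apply IsDiscreteValuationRing.unit_mul_pow_congr_pow hπ hπ (b*η*η) wu
        push_cast
        linear_combination hby - π^(2*r)*hwu'
      have hnr : n = r := by omega
      subst hnr
      -- solve δ² + (η π^n) δ + π^(2n+2) ρ₁ = 0
      have hηη : (η : O) * (↑η⁻¹ : O) = 1 := by exact_mod_cast η.mul_inv
      obtain ⟨δ, hδ⟩ := solve_quad O (1 : Oˣ) ((η : O) * π^n) (π^(2*n+2)*ρ₁)
        (π^2*ρ₁*(↑η⁻¹ : O)^2)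
        (by push_cast
            linear_combination (-(π^(2*n+2)*ρ₁)*((η : O)*(↑η⁻¹ : O)+1))*hηη)
        (by rw [hMI, Ideal.mem_span_singleton]
            exact dvd_mul_of_dvd_left (dvd_mul_of_dvd_left (dvd_pow_self π two_ne_zero) _) _)
      rw [Units.val_one, one_mul] at hδ
      refine ⟨algebraMap O K (x₀ + δ), algebraMap O K ((η : O) * π^n), ?_⟩
      have hsol : π^(2*n+1)*(x₀+δ)^2 + π^(2*n+1)*(x₀+δ)*((η : O)*π^n)
          + (b : O)*((η : O)*π^n)^2 = (cu : O)*π^(2*n) := by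
        linear_combination hρ + π^(2*n+1)*hδ + (π^(2*n+1)*x₀*δ)*h2
      have := congrArg (algebraMap O K) hsol
      simp only [map_add, map_mul, map_pow] at this ⊢
      linear_combination this
    · -- case v(c) = 1 : c = cu * π
      -- Step A : π^(r+1) ∣ y₀
      have hdy : π^(r+1) ∣ y₀ := by
        rcases eq_or_ne y₀ 0 with rfl | hy₀0
        · exact dvd_zero _
        obtain ⟨t, η, hyfac⟩ := IsDiscreteValuationRing.eq_unit_mul_pow_irreducible hy₀0 hπ
        have htr : r + 1 ≤ t := by
          by_contra hcon
          have htr' : t ≤ r := by omega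
          set S : O := (cu : O) + π^(2*r+2)*ρ₁ - x₀^2 - x₀*((η : O)*π^t) with hS
          have hsq : (b : O)*((η : O)*π^t)^2 = π^(2*r+1) * S := by
            rw [hS, ← hyfac]; linear_combination hρ
          have hc1 : π^(2*t) * ((b : O)*(η : O)^2) = π^(2*t) * (π * (π^(2*r-2*t)*S)) := by
            rw [show (2:ℕ)*r+1 = 2*t + ((2*r-2*t) + 1) from by omega, pow_add, pow_add,
              pow_one] at hsq
            linear_combination hsq
          have h8 := mul_left_cancel₀ (pow_ne_zero _ hπ0) hc1
          rcases hprime.dvd_or_dvd ⟨π^(2*r-2*t)*S, h8⟩ with h | h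
          · exact hπ.not_isUnit (isUnit_of_dvd_unit h b.isUnit)
          · exact hπ.not_isUnit (isUnit_of_dvd_unit (hprime.dvd_of_dvd_pow h) η.isUnit)
        refine ⟨(η : O)*π^(t-(r+1)), ?_⟩
        have hsplit : π^(r+1) * ((η : O)*π^(t-(r+1))) = (η : O) * π^((r+1)+(t-(r+1))) := by
          rw [pow_add]; ring
        rw [hyfac, hsplit, show (r+1)+(t-(r+1)) = t from by omega]
      obtain ⟨z, hz⟩ := hdy
      subst hz
      -- Step B : x₀ is a unit
      have hcan : π^(2*r+1) * (x₀^2)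
          = π^(2*r+1) * ((cu : O) + π*(π^(2*r+1)*ρ₁ - π^r*x₀*z - (b : O)*z^2)) := by
        linear_combination hρ
      have hx2 := mul_left_cancel₀ (pow_ne_zero _ hπ0) hcan
      have hxu2 : IsUnit (x₀^2) := by
        by_contra hnu
        have h1 : x₀^2 ∈ IsLocalRing.maximalIdeal O :=
          (IsLocalRing.mem_maximalIdeal _).mpr (mem_nonunits_iff.mpr hnu)
        rw [hMI, Ideal.mem_span_singleton] at h1
        obtain ⟨k, hk⟩ := h1
        have hdc : π ∣ (cu : O) := ⟨k - (π^(2*r+1)*ρ₁ - π^r*x₀*z - (b : O)*z^2), by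
          linear_combination hk - hx2⟩
        exact hπ.not_isUnit (isUnit_of_dvd_unit hdc cu.isUnit)
      have hxu : IsUnit x₀ := by
        rw [pow_two] at hxu2; exact isUnit_of_mul_isUnit_left hxu2
      obtain ⟨xu, hxu'⟩ := hxu
      have hxx : x₀ * (↑xu⁻¹ : O) = 1 := by
        rw [← hxu']; exact_mod_cast xu.mul_inv
      -- Step C : Hensel in y
      obtain ⟨δ, hδ⟩ := solve_quad O b (π^(2*r+1)*x₀) (π^(4*r+3)*ρ₁)
        ((b : O)*π*ρ₁*(↑xu⁻¹ : O)^2)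
        (by linear_combination (-((b : O)*π^(4*r+3)*ρ₁)*(x₀*(↑xu⁻¹ : O)+1))*hxx)
        (by rw [hMI, Ideal.mem_span_singleton]
            exact ⟨(b : O)*ρ₁*(↑xu⁻¹ : O)^2, by ring⟩)
      refine ⟨algebraMap O K x₀, algebraMap O K (π^(r+1)*z + δ), ?_⟩
      have hsol : π^(2*r+1)*x₀^2 + π^(2*r+1)*x₀*(π^(r+1)*z + δ)
          + (b : O)*(π^(r+1)*z + δ)^2 = ((cu : O)*π)*π^(2*r) := by
        linear_combination hρ + hδ + ((b : O)*π^(r+1)*z*δ)*h2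
      have := congrArg (algebraMap O K) hsol
      simp only [map_add, map_mul, map_pow] at this ⊢
      linear_combination this
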